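/- Let f : {-1,1}^n → ℝ be odd and not identically zero. Then there exists x* maximizing f, and considering the chain of subcubes C_i (i = 1,…,n+1) where C_i fixes coordinates i,…,n to x*_i,…,x*_n (C_{n+1} being the full cube), there exists i ∈ [n] such that the restriction of f to C_{i+1} has a degree-1 Fourier coefficient |f̂_{C_{i+1}}({i})| ≥ ‖f‖_∞ / n; consequently Var(f restricted to C_{i+1}) ≥ ‖f‖_∞² / n². -/

import Mathlib

open Finset

noncomputable section

/-- sign of a bit: `true` ↦ -1 (representing the bit -1), `false` ↦ 1. -/
def bsgn (b : Bool) : ℝ := if b then -1 else 1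

/-- character χ_S(x) = ∏_{i ∈ S} x_i on the cube {-1,1}^n. -/
def chiCube {n : ℕ} (S : Finset (Fin n)) (x : Fin n → Bool) : ℝ := ∏ i ∈ S, bsgn (x i)

/-- expectation under the uniform distribution on a finite type. -/
def expec {α : Type*} [Fintype α] (f : α → ℝ) : ℝ := (∑ x, f x) / (Fintype.card α)

/-- Fourier coefficient f̂(S) = E_x[f(x)·χ_S(x)]. -/
def fhat {n : ℕ} (f : (Fin n → Bool) → ℝ) (S : Finset (Fin n)) : ℝ :=
  expec fun x => f x * chiCube S x

/-- variance under the uniform distribution. -/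
def cubeVar {α : Type*} [Fintype α] (f : α → ℝ) : ℝ :=
  expec (fun x => f x ^ 2) - (expec f) ^ 2

/-- merge: equals `x` on `J` and `z` off `J`. -/
def mergeOn {n : ℕ} (J : Finset (Fin n)) (x z : Fin n → Bool) : Fin n → Bool :=
  fun i => if i ∈ J then x i else z i

namespace Stmt14Aux

lemma bsgn_not (b : Bool) : bsgn (!b) = - bsgn b := by cases b <;> simp [bsgn]
lemma bsgn_sq (b : Bool) : bsgn b ^ 2 = 1 := by cases b <;> simp [bsgn]
lemma abs_bsgn (b : Bool) : |bsgn b| = 1 := by cases b <;> simp [bsgn]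

lemma sum_flip {n : ℕ} (i : Fin n) (h : (Fin n → Bool) → ℝ) :
    ∑ y : Fin n → Bool, h (Function.update y i (!(y i))) = ∑ y, h y := by
  have hinv : Function.Involutive (fun y : Fin n → Bool => Function.update y i (!(y i))) := by
    intro y; funext j
    rcases eq_or_ne j i with rfl | hj
    · simp
    · simp [Function.update_of_ne hj]
  exact Fintype.sum_bijective _ hinv.bijective _ _ (fun y => rfl)

lemma sum_update_pair {n : ℕ} (i : Fin n) (h : (Fin n → Bool) → ℝ) :
    ∑ y : Fin n → Bool, (h (Function.update y i false) + h (Function.update y i true))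
      = 2 * ∑ y, h y := by
  have h1 : ∀ y : Fin n → Bool, h (Function.update y i false) + h (Function.update y i true)
      = h (Function.update y i (y i)) + h (Function.update y i (!(y i))) := by
    intro y; cases hb : y i <;> simp [hb, add_comm]
  simp only [h1, Function.update_eq_self]
  rw [Finset.sum_add_distrib, sum_flip]
  ring

lemma sum_odd_zero {n : ℕ} (f : (Fin n → Bool) → ℝ)
    (hodd : ∀ x, f (fun i => !(x i)) = - f x) :
    ∑ y : Fin n → Bool, f y = 0 := by
  have hinv : Function.Involutive (fun y : Fin n → Bool => fun j => !(y j)) := by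
    intro y; funext j; simp
  have h1 : ∑ y : Fin n → Bool, f (fun j => !(y j)) = ∑ y, f y :=
    Fintype.sum_bijective _ hinv.bijective _ _ (fun y => rfl)
  have h2 : ∑ y : Fin n → Bool, f (fun j => !(y j)) = - ∑ y, f y := by
    simp [hodd]
  linarith

lemma sum_bsgn_zero {n : ℕ} (i : Fin n) : ∑ y : Fin n → Bool, bsgn (y i) = 0 := by
  have := sum_flip i (fun y => bsgn (y i))
  simp only [Function.update_self, bsgn_not, Finset.sum_neg_distrib] at this
  linarith

end Stmt14Aux

open Stmt14Aux

theorem stmt_14 (n : ℕ) (f : (Fin n → Bool) → ℝ)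
    (hodd : ∀ x, f (fun i => !(x i)) = - f x) (hne : f ≠ 0) (M : ℝ)
    (hM : M = univ.sup' Finset.univ_nonempty fun x : Fin n → Bool => |f x|) :
    ∃ xstar : Fin n → Bool, (∀ y, f y ≤ f xstar) ∧
      ∃ i : Fin n,
        |fhat (fun y : Fin n → Bool => f (fun j : Fin n => if j ≤ i then y j else xstar j)) {i}| ≥ M / n ∧
        cubeVar (fun y : Fin n → Bool => f (fun j : Fin n => if j ≤ i then y j else xstar j)) ≥ M ^ 2 / n ^ 2 := by
  -- n is positive
  have hn : 0 < n := by
    rcases Nat.eq_zero_or_pos n with rfl | h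
    · exfalso; apply hne; funext x
      have h0 := hodd x
      have hx : (fun i : Fin 0 => !(x i)) = x := funext fun i => i.elim0
      rw [hx] at h0
      have : f x = 0 := by linarith
      simpa using this
    · exact h
  -- the maximizer
  obtain ⟨xstar, -, hmaxmem⟩ := Finset.exists_max_image Finset.univ f Finset.univ_nonempty
  have hmax : ∀ y, f y ≤ f xstar := fun y => hmaxmem y (mem_univ y)
  refine ⟨xstar, hmax, ?_⟩
  have habs : ∀ y, |f y| ≤ f xstar := by
    intro y
    rw [abs_le]
    refine ⟨?_, hmax y⟩
    have := hmax (fun j => !(y j))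
    rw [hodd] at this; linarith
  have hMx : M = f xstar := by
    rw [hM]
    apply le_antisymm
    · exact Finset.sup'_le _ _ fun y _ => habs y
    · exact le_trans (le_abs_self _) (Finset.le_sup' (fun x => |f x|) (mem_univ xstar))
  have hMpos : 0 < M := by
    obtain ⟨x0, hx0⟩ := Function.ne_iff.mp hne
    have h1 : 0 < |f x0| := by simpa using abs_pos.mpr hx0
    have h2 : |f x0| ≤ M := hMx ▸ habs x0
    linarith
  have hcard : (Fintype.card (Fin n → Bool) : ℝ) = 2 ^ n := by simp
  have hP : (0:ℝ) < 2 ^ n := by positivity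
  set Fsum : ℕ → ℝ :=
    fun k => ∑ y : Fin n → Bool, f (fun j : Fin n => if (j : ℕ) < k then y j else xstar j) with hFsum
  have hF0 : Fsum 0 = 2 ^ n * M := by
    have h1 : ∀ y : Fin n → Bool,
        (fun j : Fin n => if (j : ℕ) < 0 then y j else xstar j) = xstar := by
      intro y; funext j; simp
    simp only [hFsum, h1, Finset.sum_const, card_univ, nsmul_eq_mul, hMx]
    simp
  have hFn : Fsum n = 0 := by
    have h1 : ∀ y : Fin n → Bool, (fun j : Fin n => if (j : ℕ) < n then y j else xstar j) = y := by
      intro y; funext j; simp [j.isLt]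
    simp only [hFsum, h1]
    exact sum_odd_zero f hodd
  have htel : ∑ k ∈ Finset.range n, (Fsum k - Fsum (k + 1)) = 2 ^ n * M := by
    rw [Finset.sum_range_sub' Fsum n, hF0, hFn, sub_zero]
  -- pigeonhole
  have hpig : ∃ k, ∃ hk : k < n, 2 ^ n * M / n ≤ |Fsum k - Fsum (k + 1)| := by
    by_contra hcon
    push_neg at hcon
    have h1 : ∑ k ∈ range n, |Fsum k - Fsum (k + 1)| < ∑ k ∈ range n, 2 ^ n * M / n := by
      refine Finset.sum_lt_sum_of_nonempty (Finset.nonempty_range_iff.mpr hn.ne') ?_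
      intro k hk
      exact hcon k (Finset.mem_range.mp hk)
    have h2 : ∑ _k ∈ range n, (2:ℝ) ^ n * M / n = 2 ^ n * M := by
      rw [Finset.sum_const, card_range, nsmul_eq_mul]
      field_simp
    have h3 : (2:ℝ) ^ n * M ≤ ∑ k ∈ range n, |Fsum k - Fsum (k + 1)| := by
      calc (2:ℝ) ^ n * M = |∑ k ∈ range n, (Fsum k - Fsum (k + 1))| := by
            rw [htel]; exact (abs_of_pos (by positivity)).symm
        _ ≤ _ := Finset.abs_sum_le_sum_abs _ _
    linarith
  obtain ⟨k, hk, hkge⟩ := hpig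
  set i : Fin n := ⟨k, hk⟩ with hi
  refine ⟨i, ?_⟩
  set g : (Fin n → Bool) → ℝ :=
    fun y => f (fun j : Fin n => if j ≤ i then y j else xstar j) with hg
  -- the key subcube function Q
  set Q : (Fin n → Bool) → Bool → (Fin n → Bool) :=
    fun y b (j : Fin n) => if j = i then b else if (j : ℕ) < k then y j else xstar j with hQ
  have hQa : ∀ (y : Fin n → Bool) (b : Bool),
      (fun j : Fin n => if j ≤ i then Function.update y i b j else xstar j) = Q y b := by
    intro y b; funext j
    rcases eq_or_ne j i with rfl | hj
    · simp [hQ]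
    · have : (j ≤ i) ↔ ((j : ℕ) < k) := by
        constructor
        · intro h; exact lt_of_le_of_ne (by exact_mod_cast h) (fun hh => hj (Fin.ext hh))
        · intro h; exact le_of_lt (by exact_mod_cast h)
      simp [hQ, hj, Function.update_of_ne hj, this]
  have hQb : ∀ (y : Fin n → Bool) (b : Bool),
      (fun j : Fin n => if (j : ℕ) < k + 1 then Function.update y i b j else xstar j) = Q y b := by
    intro y b; funext j
    rcases eq_or_ne j i with rfl | hj
    · simp [hQ, hi, Nat.lt_succ_self]
    · have : ((j : ℕ) < k + 1) ↔ ((j : ℕ) < k) := by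
        rw [Nat.lt_succ_iff]
        constructor
        · intro h; exact lt_of_le_of_ne h (fun hh => hj (Fin.ext hh))
        · exact le_of_lt
      simp [hQ, hj, Function.update_of_ne hj, this]
  have hQc : ∀ y : Fin n → Bool,
      f (Q y (xstar i)) = f (fun j : Fin n => if (j : ℕ) < k then y j else xstar j) := by
    intro y; congr 1; funext j
    rcases eq_or_ne j i with rfl | hj
    · simp [hQ, hi]
    · simp [hQ, hj]
  -- the two pairing identities
  have hpair1 : Fsum k + (∑ y : Fin n → Bool, f (Q y (!(xstar i)))) = 2 * Fsum (k + 1) := by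
    have := sum_update_pair i (fun y => f (fun j : Fin n => if (j : ℕ) < k + 1 then y j else xstar j))
    simp only [hQb] at this
    rw [← this]
    have hpt : ∀ y : Fin n → Bool,
        f (Q y false) + f (Q y true) = f (Q y (xstar i)) + f (Q y (!(xstar i))) := by
      intro y; cases hb : xstar i <;> simp [hb, add_comm]
    simp only [hpt]
    rw [Finset.sum_add_distrib]
    simp only [hQc]; rfl
  have hpair2 : 2 * (∑ y : Fin n → Bool, g y * (bsgn (y i) * bsgn (xstar i)))
      = Fsum k - (∑ y : Fin n → Bool, f (Q y (!(xstar i)))) := by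
    have := sum_update_pair i (fun y => g y * (bsgn (y i) * bsgn (xstar i)))
    rw [← this]
    have hpt : ∀ y : Fin n → Bool,
        g (Function.update y i false) * (bsgn (Function.update y i false i) * bsgn (xstar i))
          + g (Function.update y i true) * (bsgn (Function.update y i true i) * bsgn (xstar i))
        = f (Q y (xstar i)) - f (Q y (!(xstar i))) := by
      intro y
      have e1 : g (Function.update y i false) = f (Q y false) := by
        simp only [hg]; rw [hQa]
      have e2 : g (Function.update y i true) = f (Q y true) := by
        simp only [hg]; rw [hQa]
      rw [e1, e2, Function.update_self, Function.update_self]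
      cases hb : xstar i <;> simp [bsgn] <;> ring
    simp only [hpt]
    rw [Finset.sum_sub_distrib]
    simp only [hQc]; rfl
  have hT : ∑ y : Fin n → Bool, g y * (bsgn (y i) * bsgn (xstar i)) = Fsum k - Fsum (k + 1) := by
    linarith
  -- Fourier coefficient of g in direction i
  have hchi : ∀ y : Fin n → Bool, chiCube {i} y = bsgn (y i) := by
    intro y; simp [chiCube]
  have hfhat : fhat g {i} = (∑ y : Fin n → Bool, g y * bsgn (y i)) / 2 ^ n := by
    simp only [fhat, expec, hcard, hchi]
  have habsT : |∑ y : Fin n → Bool, g y * bsgn (y i)| = |Fsum k - Fsum (k + 1)| := by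
    have : ∑ y : Fin n → Bool, g y * (bsgn (y i) * bsgn (xstar i))
        = bsgn (xstar i) * ∑ y : Fin n → Bool, g y * bsgn (y i) := by
      rw [Finset.mul_sum]; congr 1; funext y; ring
    rw [← hT, this, abs_mul, abs_bsgn, one_mul]
  have hn' : (0:ℝ) < n := by exact_mod_cast hn
  have hfhat_ge : M / n ≤ |fhat g {i}| := by
    rw [hfhat, abs_div, abs_of_pos hP, habsT, le_div_iff₀ hP]
    calc M / n * 2 ^ n = 2 ^ n * M / n := by ring
      _ ≤ |Fsum k - Fsum (k + 1)| := hkge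
  constructor
  · exact hfhat_ge
  -- variance part
  have hsumg : ∑ y : Fin n → Bool, g y = 2 ^ n * expec g := by
    rw [expec, hcard]; field_simp
  set c : ℝ := expec g with hc
  have hsub : ∑ y : Fin n → Bool, (g y - c) * bsgn (y i)
      = ∑ y : Fin n → Bool, g y * bsgn (y i) := by
    have : ∀ y : Fin n → Bool, (g y - c) * bsgn (y i)
        = g y * bsgn (y i) - c * bsgn (y i) := fun y => by ring
    simp only [this]
    rw [Finset.sum_sub_distrib, ← Finset.mul_sum, sum_bsgn_zero, mul_zero, sub_zero]
  have hCS : (∑ y : Fin n → Bool, g y * bsgn (y i)) ^ 2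
      ≤ (∑ y : Fin n → Bool, (g y - c) ^ 2) * 2 ^ n := by
    have := Finset.sum_mul_sq_le_sq_mul_sq Finset.univ (fun y : Fin n → Bool => g y - c)
      (fun y : Fin n → Bool => bsgn (y i))
    have hb : ∑ y : Fin n → Bool, bsgn (y i) ^ 2 = 2 ^ n := by
      simp only [bsgn_sq]
      rw [Finset.sum_const, card_univ, nsmul_eq_mul, mul_one]
      exact_mod_cast hcard
    rw [hsub, hb] at this
    exact this
  have hvar : cubeVar g = (∑ y : Fin n → Bool, (g y - c) ^ 2) / 2 ^ n := by
    have hexp : ∀ y : Fin n → Bool, (g y - c) ^ 2 = g y ^ 2 - 2 * c * g y + c ^ 2 :=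
      fun y => by ring
    rw [cubeVar, ← hc, expec, hcard]
    simp only [hexp]
    rw [Finset.sum_add_distrib, Finset.sum_sub_distrib, ← Finset.mul_sum, hsumg,
      Finset.sum_const, card_univ, nsmul_eq_mul, hcard]
    field_simp
    ring
  have hfin : cubeVar g ≥ M ^ 2 / n ^ 2 := by
    have h1 : (M / n) ^ 2 ≤ fhat g {i} ^ 2 := by
      rw [← sq_abs (fhat g {i})]
      exact pow_le_pow_left₀ (by positivity) hfhat_ge 2
    have h2 : fhat g {i} ^ 2 ≤ cubeVar g := by
      rw [hfhat, hvar, div_pow]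
      rw [div_le_div_iff₀ (by positivity) hP]
      calc (∑ y : Fin n → Bool, g y * bsgn (y i)) ^ 2 * 2 ^ n
          ≤ ((∑ y : Fin n → Bool, (g y - c) ^ 2) * 2 ^ n) * 2 ^ n :=
            mul_le_mul_of_nonneg_right hCS (le_of_lt hP)
        _ = (∑ y : Fin n → Bool, (g y - c) ^ 2) * (2 ^ n) ^ 2 := by ring
    have h3 : M ^ 2 / n ^ 2 = (M / n) ^ 2 := by rw [div_pow]
    linarith
  exact hfin
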